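/- Let T and F be nonnegative n×n matrices with ρ(T) < 1 and ρ(F(I−T)^{-1}) > 0. Then the function a ↦ ρ(T + aF) is unbounded as a → ∞; in particular, for every M > 0 there exists a > 0 with ρ(T + aF) > M. -/

import Mathlib

open Matrix Filter Topology
open scoped ENNReal NNReal Pointwise

noncomputable def specRad {n : ℕ} (A : Matrix (Fin n) (Fin n) ℝ) : ℝ :=
  (spectralRadius ℂ (A.map Complex.ofReal)).toReal

def MatIrred {n : ℕ} (A : Matrix (Fin n) (Fin n) ℝ) : Prop :=
  ∀ i j, ∃ k : ℕ, 0 < k ∧ 0 < (A ^ k) i j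

def MatPrimitive {n : ℕ} (A : Matrix (Fin n) (Fin n) ℝ) : Prop :=
  ∃ k : ℕ, 0 < k ∧ ∀ i j, 0 < (A ^ k) i j

section Aux

attribute [local instance] Matrix.linftyOpNormedRing Matrix.linftyOpNormedAlgebra

variable {n : ℕ}

/-- Abbreviation for complexification. -/
noncomputable def mcx (A : Matrix (Fin n) (Fin n) ℝ) : Matrix (Fin n) (Fin n) ℂ :=
  A.map Complex.ofReal

lemma mcx_eq (A : Matrix (Fin n) (Fin n) ℝ) :
    mcx A = Complex.ofRealHom.mapMatrix A := rfl

lemma mcx_pow (A : Matrix (Fin n) (Fin n) ℝ) (k : ℕ) : mcx (A ^ k) = (mcx A) ^ k := by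
  simp only [mcx_eq, map_pow]

lemma specRad_eq (A : Matrix (Fin n) (Fin n) ℝ) :
    specRad A = (spectralRadius ℂ (mcx A)).toReal := rfl

lemma specRad_nonneg (A : Matrix (Fin n) (Fin n) ℝ) : 0 ≤ specRad A :=
  ENNReal.toReal_nonneg

lemma nn_mul {A B : Matrix (Fin n) (Fin n) ℝ} (hA : ∀ i j, 0 ≤ A i j)
    (hB : ∀ i j, 0 ≤ B i j) : ∀ i j, 0 ≤ (A * B) i j := by
  intro i j
  rw [Matrix.mul_apply]
  exact Finset.sum_nonneg fun l _ => mul_nonneg (hA i l) (hB l j)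

lemma nn_pow {A : Matrix (Fin n) (Fin n) ℝ} (hA : ∀ i j, 0 ≤ A i j) (k : ℕ) :
    ∀ i j, 0 ≤ (A ^ k) i j := by
  induction k with
  | zero =>
      intro i j; rw [pow_zero]
      by_cases h : i = j <;> simp [Matrix.one_apply, h]
  | succ m ih =>
      rw [pow_succ]
      exact nn_mul ih hA

lemma mul_mono {A B C D : Matrix (Fin n) (Fin n) ℝ} (hA : ∀ i j, 0 ≤ A i j)
    (hC : ∀ i j, 0 ≤ C i j) (hAB : ∀ i j, A i j ≤ B i j) (hCD : ∀ i j, C i j ≤ D i j) :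
    ∀ i j, (A * C) i j ≤ (B * D) i j := by
  intro i j
  rw [Matrix.mul_apply, Matrix.mul_apply]
  refine Finset.sum_le_sum fun l _ => ?_
  exact mul_le_mul (hAB i l) (hCD l j) (hC l j) ((hA i l).trans (hAB i l))

lemma pow_mono {A B : Matrix (Fin n) (Fin n) ℝ} (hA : ∀ i j, 0 ≤ A i j)
    (hAB : ∀ i j, A i j ≤ B i j) (k : ℕ) : ∀ i j, (A ^ k) i j ≤ (B ^ k) i j := by
  induction k with
  | zero => intro i j; simp [pow_zero]
  | succ m ih =>
      rw [pow_succ, pow_succ]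
      exact mul_mono (nn_pow hA m) hA ih hAB

lemma diag_pow_le {A : Matrix (Fin n) (Fin n) ℝ} (hA : ∀ i j, 0 ≤ A i j) (i : Fin n)
    (q m : ℕ) : ((A ^ q) i i) ^ m ≤ (A ^ (q * m)) i i := by
  induction m with
  | zero => simp [Matrix.one_apply]
  | succ m ih =>
      have h1 : A ^ (q * (m + 1)) = A ^ (q * m) * A ^ q := by
        rw [← pow_add]; ring_nf
      rw [h1]
      have h2 : (A ^ (q * m)) i i * (A ^ q) i i ≤ (A ^ (q * m) * A ^ q) i i := by
        rw [Matrix.mul_apply]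
        exact Finset.single_le_sum
          (f := fun l => (A ^ (q * m)) i l * (A ^ q) l i)
          (fun l _ => mul_nonneg (nn_pow hA _ i l) (nn_pow hA _ l i)) (Finset.mem_univ i)
      calc ((A ^ q) i i) ^ (m + 1) = ((A ^ q) i i) ^ m * (A ^ q) i i := by ring
        _ ≤ (A ^ (q * m)) i i * (A ^ q) i i :=
            mul_le_mul_of_nonneg_right ih (nn_pow hA q i i)
        _ ≤ _ := h2

lemma entry_norm_le (M : Matrix (Fin n) (Fin n) ℂ) (i j : Fin n) : ‖M i j‖ ≤ ‖M‖ := by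
  have h1 : ‖M i j‖₊ ≤ ‖M‖₊ := by
    rw [Matrix.linfty_opNNNorm_def]
    calc ‖M i j‖₊ ≤ ∑ l, ‖M i l‖₊ :=
          Finset.single_le_sum (f := fun l => ‖M i l‖₊) (fun l _ => zero_le)
            (Finset.mem_univ j)
      _ ≤ Finset.univ.sup (fun k => ∑ l, ‖M k l‖₊) :=
          Finset.le_sup (f := fun k => ∑ l, ‖M k l‖₊) (Finset.mem_univ i)
  exact_mod_cast h1

lemma specRad_ne_top [Nonempty (Fin n)] (A : Matrix (Fin n) (Fin n) ℝ) :
    spectralRadius ℂ (mcx A) ≠ ⊤ :=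
  ((spectrum.spectralRadius_le_nnnorm (𝕜 := ℂ) (mcx A)).trans_lt ENNReal.coe_lt_top).ne

lemma real_entry_norm_le (A : Matrix (Fin n) (Fin n) ℝ) (k : ℕ) (i j : Fin n) :
    (A ^ k) i j ≤ ‖(mcx A) ^ k‖ := by
  calc (A ^ k) i j ≤ |(A ^ k) i j| := le_abs_self _
    _ = ‖((mcx (A ^ k)) i j)‖ := by
        simp [mcx, Matrix.map_apply, Complex.norm_real, Real.norm_eq_abs]
    _ ≤ ‖mcx (A ^ k)‖ := entry_norm_le _ i j
    _ = ‖(mcx A) ^ k‖ := by rw [mcx_pow]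

/-- Key lower bound: diagonal entries of powers bound the spectral radius from below. -/
lemma diag_le_specRad_pow {A : Matrix (Fin n) (Fin n) ℝ} (hA : ∀ i j, 0 ≤ A i j)
    (i : Fin n) {q : ℕ} (hq : 0 < q) : (A ^ q) i i ≤ specRad A ^ q := by
  haveI : Nonempty (Fin n) := ⟨i⟩
  haveI : CompleteSpace (Matrix (Fin n) (Fin n) ℂ) := FiniteDimensional.complete ℂ _
  set c : ℝ := (A ^ q) i i with hcdef
  have hc0 : 0 ≤ c := nn_pow hA q i i
  set c' : NNReal := c.toNNReal with hc'def
  have hc'c : (c' : ℝ) = c := Real.coe_toNNReal c hc0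
  have key : ∀ m : ℕ, (c' : NNReal) ^ m ≤ ‖(mcx A) ^ (q * m)‖₊ := by
    intro m
    have h1 : c ^ m ≤ (A ^ (q * m)) i i := diag_pow_le hA i q m
    have h2 : (A ^ (q * m)) i i ≤ ‖(mcx A) ^ (q * m)‖ := real_entry_norm_le A _ i i
    have : ((c' ^ m : NNReal) : ℝ) ≤ (‖(mcx A) ^ (q * m)‖₊ : ℝ) := by
      rw [coe_nnnorm]
      push_cast [hc'c]
      exact h1.trans h2
    exact_mod_cast this
  have gel := spectrum.pow_nnnorm_pow_one_div_tendsto_nhds_spectralRadius (mcx A)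
  have hqm : Tendsto (fun m : ℕ => q * m) atTop atTop :=
    tendsto_atTop_mono (fun m => Nat.le_mul_of_pos_left m hq) tendsto_id
  have gel2 : Tendsto (fun m : ℕ => (‖(mcx A) ^ (q * m)‖₊ : ℝ≥0∞) ^ (1 / (q * m : ℕ) : ℝ))
      atTop (𝓝 (spectralRadius ℂ (mcx A))) := gel.comp hqm
  have hlow : ((c' : ℝ≥0∞) ^ ((q : ℝ))⁻¹) ≤ spectralRadius ℂ (mcx A) := by
    refine ge_of_tendsto gel2 ?_
    filter_upwards [eventually_ge_atTop 1] with m hm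
    have hm0 : (m : ℝ) ≠ 0 := Nat.cast_ne_zero.mpr (by omega)
    have hq0 : (q : ℝ) ≠ 0 := Nat.cast_ne_zero.mpr hq.ne'
    have e1 : ((c' : ℝ≥0∞) ^ ((q : ℝ))⁻¹) = ((c' : ℝ≥0∞) ^ (m : ℕ)) ^ (1 / (q * m : ℕ) : ℝ) := by
      rw [← ENNReal.rpow_natCast (c' : ℝ≥0∞) m, ← ENNReal.rpow_mul]
      congr 1
      push_cast
      field_simp
    rw [e1]
    refine ENNReal.rpow_le_rpow ?_ (by positivity)
    calc ((c' : ℝ≥0∞) ^ (m : ℕ)) = ((c' ^ m : NNReal) : ℝ≥0∞) := by push_cast; rfl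
      _ ≤ _ := ENNReal.coe_le_coe.mpr (key m)
  have hfin := specRad_ne_top A
  have h2 := ENNReal.toReal_mono hfin hlow
  have h3 : ((c' : ℝ≥0∞) ^ ((q : ℝ))⁻¹).toReal = c ^ ((q : ℝ))⁻¹ := by
    rw [← ENNReal.toReal_rpow, ENNReal.coe_toReal, hc'c]
  rw [h3] at h2
  calc (A ^ q) i i = c := rfl
    _ = (c ^ ((q : ℝ))⁻¹) ^ q := (Real.rpow_inv_natCast_pow hc0 hq.ne').symm
    _ ≤ (specRad A) ^ q := pow_le_pow_left₀ (Real.rpow_nonneg hc0 _) h2 q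

lemma specRad_eq_zero_of_pow (A : Matrix (Fin n) (Fin n) ℝ) {j : ℕ} (hj : 0 < j)
    (h : A ^ j = 0) : specRad A = 0 := by
  haveI : CompleteSpace (Matrix (Fin n) (Fin n) ℂ) := FiniteDimensional.complete ℂ _
  have gel := spectrum.pow_nnnorm_pow_one_div_tendsto_nhds_spectralRadius (mcx A)
  have h0 : Tendsto (fun N : ℕ => (‖(mcx A) ^ N‖₊ : ℝ≥0∞) ^ (1 / N : ℝ)) atTop (𝓝 0) := by
    refine Tendsto.congr' ?_ (tendsto_const_nhds (x := (0 : ℝ≥0∞)))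
    filter_upwards [eventually_ge_atTop j] with N hN
    have hAN : A ^ N = 0 := by
      obtain ⟨k, rfl⟩ := Nat.le.dest hN
      rw [pow_add, h, zero_mul]
    have : (mcx A) ^ N = 0 := by
      rw [← mcx_pow, hAN, mcx_eq, map_zero]
    rw [this, nnnorm_zero, ENNReal.coe_zero,
      ENNReal.zero_rpow_of_pos (one_div_pos.mpr (Nat.cast_pos.mpr (by omega)))]
  have hz := tendsto_nhds_unique gel h0
  rw [specRad_eq, hz, ENNReal.toReal_zero]

lemma path_pos {A : Matrix (Fin n) (Fin n) ℝ} (hA : ∀ i j, 0 ≤ A i j) (p : ℕ → Fin n)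
    (m : ℕ) (hp : ∀ l < m, 0 < A (p l) (p (l + 1))) : 0 < (A ^ m) (p 0) (p m) := by
  induction m with
  | zero => simp [Matrix.one_apply]
  | succ m ih =>
      have h1 : 0 < (A ^ m) (p 0) (p m) := ih fun l hl => hp l (by omega)
      rw [pow_succ, Matrix.mul_apply]
      exact Finset.sum_pos'
        (fun l _ => mul_nonneg (nn_pow hA m _ l) (hA l _))
        ⟨p m, Finset.mem_univ _, mul_pos h1 (hp m (by omega))⟩

lemma exists_path {A : Matrix (Fin n) (Fin n) ℝ} (hA : ∀ i j, 0 ≤ A i j) :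
    ∀ m (i j : Fin n), 0 < (A ^ m) i j →
      ∃ p : ℕ → Fin n, p 0 = i ∧ p m = j ∧ ∀ l < m, 0 < A (p l) (p (l + 1)) := by
  intro m
  induction m with
  | zero =>
      intro i j h
      rw [pow_zero] at h
      by_cases hij : i = j
      · exact ⟨fun _ => i, rfl, by rw [hij], fun l hl => absurd hl (by omega)⟩
      · rw [Matrix.one_apply_ne hij] at h; exact absurd h (lt_irrefl 0)
  | succ m ih =>
      intro i j h
      rw [pow_succ, Matrix.mul_apply] at h
      have hex : ∃ l, 0 < (A ^ m) i l * A l j := by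
        by_contra hc
        push_neg at hc
        have : ∑ l, (A ^ m) i l * A l j ≤ 0 := Finset.sum_nonpos fun l _ => hc l
        linarith
      obtain ⟨l, hl⟩ := hex
      have h1 : 0 < (A ^ m) i l := by
        rcases mul_pos_iff.mp hl with ⟨h1, _⟩ | ⟨h1, h2⟩
        · exact h1
        · exact absurd h2 (not_lt.mpr (hA l j))
      have h2 : 0 < A l j := by
        rcases mul_pos_iff.mp hl with ⟨_, h2⟩ | ⟨h1, _⟩
        · exact h2
        · exact absurd h1 (not_lt.mpr (nn_pow hA m i l))
      obtain ⟨p, hp0, hpm, hps⟩ := ih i l h1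
      refine ⟨fun t => if t = m + 1 then j else p t, by simp [hp0], by simp, ?_⟩
      intro t ht
      by_cases htm : t = m
      · show 0 < A (if t = m + 1 then j else p t) (if t + 1 = m + 1 then j else p (t + 1))
        rw [if_neg (show t ≠ m + 1 by omega), if_pos (show t + 1 = m + 1 by omega), htm, hpm]
        exact h2
      · have ht1 : t + 1 ≠ m + 1 := by omega
        have ht2 : t ≠ m + 1 := by omega
        simp only [if_neg ht1, if_neg ht2]
        exact hps t (by omega)

lemma pow_card_eq_zero {A : Matrix (Fin n) (Fin n) ℝ} (hA : ∀ i j, 0 ≤ A i j)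
    (hdiag : ∀ m, 0 < m → ∀ i, (A ^ m) i i ≤ 0) : A ^ n = 0 := by
  ext i j
  rw [Matrix.zero_apply]
  by_contra hne
  have hpos : 0 < (A ^ n) i j := lt_of_le_of_ne (nn_pow hA n i j) (Ne.symm hne)
  obtain ⟨p, hp0, hpn, hps⟩ := exists_path hA n i j hpos
  have hni : ¬ Function.Injective (fun t : Fin (n + 1) => p t) := by
    intro hinj
    have := Fintype.card_le_of_injective _ hinj
    simp at this
  rw [Function.not_injective_iff] at hni
  obtain ⟨a, b, hab, hne'⟩ := hni
  rcases hne'.lt_or_gt with hlt | hlt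
  all_goals {
    first
    | (have hstep : ∀ l < (b : ℕ) - (a : ℕ), 0 < A (p ((a : ℕ) + l)) (p ((a : ℕ) + l + 1)) := by
        intro l hlf
        exact hps _ (by omega)
       have hkey := path_pos hA (fun t => p ((a : ℕ) + t)) ((b : ℕ) - (a : ℕ))
        (fun l hlf => by
          have := hstep l hlf
          simpa [Nat.add_assoc] using this)
       simp only [Nat.add_zero] at hkey
       have heq : (a : ℕ) + ((b : ℕ) - (a : ℕ)) = (b : ℕ) := by omega
       rw [heq] at hkey
       rw [show p (b : ℕ) = p (a : ℕ) from hab.symm] at hkey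
       exact absurd hkey (not_lt.mpr (hdiag _ (by omega) _)))
    | (have hstep : ∀ l < (a : ℕ) - (b : ℕ), 0 < A (p ((b : ℕ) + l)) (p ((b : ℕ) + l + 1)) := by
        intro l hlf
        exact hps _ (by omega)
       have hkey := path_pos hA (fun t => p ((b : ℕ) + t)) ((a : ℕ) - (b : ℕ))
        (fun l hlf => by
          have := hstep l hlf
          simpa [Nat.add_assoc] using this)
       simp only [Nat.add_zero] at hkey
       have heq : (b : ℕ) + ((a : ℕ) - (b : ℕ)) = (a : ℕ) := by omega
       rw [heq] at hkey
       rw [show p (a : ℕ) = p (b : ℕ) from hab] at hkey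
       exact absurd hkey (not_lt.mpr (hdiag _ (by omega) _)))
  }

lemma specRad_one_add_le [Nonempty (Fin n)] (P : Matrix (Fin n) (Fin n) ℝ) :
    specRad (1 + P) ≤ 1 + specRad P := by
  have hmap : mcx (1 + P) = 1 + mcx P := by
    rw [mcx_eq, mcx_eq, map_add, _root_.map_one]
  have key : spectralRadius ℂ (mcx (1 + P)) ≤ 1 + spectralRadius ℂ (mcx P) := by
    rw [hmap]
    show (⨆ μ ∈ spectrum ℂ ((1 : Matrix (Fin n) (Fin n) ℂ) + mcx P), (‖μ‖₊ : ℝ≥0∞)) ≤ _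
    refine iSup₂_le fun μ hμ => ?_
    have hμ' : μ ∈ ({(1 : ℂ)} : Set ℂ) + spectrum ℂ (mcx P) := by
      rw [spectrum.singleton_add_eq, _root_.map_one]
      exact hμ
    obtain ⟨x, hx, y, hy, rfl⟩ := Set.mem_add.mp hμ'
    rw [Set.mem_singleton_iff] at hx
    subst hx
    calc (‖(1 : ℂ) + y‖₊ : ℝ≥0∞) ≤ ((‖(1 : ℂ)‖₊ + ‖y‖₊ : ℝ≥0) : ℝ≥0∞) :=
          ENNReal.coe_le_coe.mpr (nnnorm_add_le _ _)
      _ = 1 + (‖y‖₊ : ℝ≥0∞) := by rw [nnnorm_one, ENNReal.coe_add, ENNReal.coe_one]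
      _ ≤ 1 + spectralRadius ℂ (mcx P) := by
          gcongr
          exact le_iSup₂ (f := fun (k : ℂ) (_ : k ∈ spectrum ℂ (mcx P)) => (‖k‖₊ : ℝ≥0∞)) y hy
  have h1 : spectralRadius ℂ (mcx P) ≠ ⊤ := specRad_ne_top P
  have h2 : (1 : ℝ≥0∞) + spectralRadius ℂ (mcx P) ≠ ⊤ :=
    ENNReal.add_ne_top.mpr ⟨ENNReal.one_ne_top, h1⟩
  have h3 := ENNReal.toReal_mono h2 key
  rwa [ENNReal.toReal_add ENNReal.one_ne_top h1, ENNReal.toReal_one] at h3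

lemma tendsto_entry_mul {f g : ℕ → Matrix (Fin n) (Fin n) ℝ} {A B : Matrix (Fin n) (Fin n) ℝ}
    (hf : ∀ i j, Tendsto (fun N => f N i j) atTop (𝓝 (A i j)))
    (hg : ∀ i j, Tendsto (fun N => g N i j) atTop (𝓝 (B i j))) :
    ∀ i j, Tendsto (fun N => (f N * g N) i j) atTop (𝓝 ((A * B) i j)) := by
  intro i j
  simp only [Matrix.mul_apply]
  exact tendsto_finset_sum _ fun l _ => (hf i l).mul (hg l j)

lemma tendsto_entry_pow {f : ℕ → Matrix (Fin n) (Fin n) ℝ} {A : Matrix (Fin n) (Fin n) ℝ}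
    (hf : ∀ i j, Tendsto (fun N => f N i j) atTop (𝓝 (A i j))) (m : ℕ) :
    ∀ i j, Tendsto (fun N => ((f N) ^ m) i j) atTop (𝓝 ((A ^ m) i j)) := by
  induction m with
  | zero =>
      intro i j
      simp only [pow_zero]
      exact tendsto_const_nhds
  | succ m ih =>
      intro i j
      simp only [pow_succ]
      exact tendsto_entry_mul ih hf i j

theorem specRad_unbounded_of_R0_pos {n : ℕ} (T F : Matrix (Fin n) (Fin n) ℝ)
    (hT : ∀ i j, 0 ≤ T i j) (hF : ∀ i j, 0 ≤ F i j)
    (hρ : specRad T < 1) (hR : 0 < specRad (F * (1 - T)⁻¹)) :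
    ∀ M : ℝ, 0 < M → ∃ a : ℝ, 0 < a ∧ M < specRad (T + a • F) := by
  intro M hM
  -- the case n = 0 is impossible
  rcases Nat.eq_zero_or_pos n with hn | hn
  · exfalso
    subst hn
    haveI : Subsingleton (Matrix (Fin 0) (Fin 0) ℂ) :=
      ⟨fun a b => by ext i j; exact i.elim0⟩
    have h0 : specRad (F * (1 - T)⁻¹) = 0 := by
      rw [specRad_eq, spectrum.SpectralRadius.of_subsingleton, ENNReal.toReal_zero]
    rw [h0] at hR
    exact lt_irrefl 0 hR
  haveI : Nonempty (Fin n) := ⟨⟨0, hn⟩⟩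
  haveI : CompleteSpace (Matrix (Fin n) (Fin n) ℂ) := FiniteDimensional.complete ℂ _
  -- spectral radius of T is < 1 in ℝ≥0∞
  have hfinT : spectralRadius ℂ (mcx T) ≠ ⊤ := specRad_ne_top T
  have hρT : spectralRadius ℂ (mcx T) < 1 := by
    refine (ENNReal.toReal_lt_toReal hfinT ENNReal.one_ne_top).mp ?_
    rw [ENNReal.toReal_one]
    exact hρ
  -- 1 - T is invertible
  have hres : IsUnit ((1 : Matrix (Fin n) (Fin n) ℂ) - mcx T) := by
    have h := spectrum.mem_resolventSet_of_spectralRadius_lt (a := mcx T) (k := (1 : ℂ))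
      (by simpa using hρT)
    rw [spectrum.mem_resolventSet_iff] at h
    simpa using h
  have hdet : IsUnit (1 - T).det := by
    have hmap : (1 : Matrix (Fin n) (Fin n) ℂ) - mcx T
        = Complex.ofRealHom.mapMatrix (1 - T) := by
      rw [map_sub, _root_.map_one, mcx_eq]
    rw [hmap] at hres
    have h1 : IsUnit (Complex.ofRealHom.mapMatrix (1 - T)).det :=
      (Matrix.isUnit_iff_isUnit_det _).mp hres
    rw [← RingHom.map_det] at h1
    rw [isUnit_iff_ne_zero] at h1 ⊢
    intro h0
    apply h1
    rw [h0, map_zero]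
  -- geometric partial sums
  have hS : ∀ N : ℕ, (∑ k ∈ Finset.range N, T ^ k) = (1 - T ^ N) * (1 - T)⁻¹ := by
    intro N
    have h := geom_sum_mul_neg T N
    calc (∑ k ∈ Finset.range N, T ^ k)
        = (∑ k ∈ Finset.range N, T ^ k) * ((1 - T) * (1 - T)⁻¹) := by
          rw [Matrix.mul_nonsing_inv _ hdet, mul_one]
      _ = ((∑ k ∈ Finset.range N, T ^ k) * (1 - T)) * (1 - T)⁻¹ := by rw [mul_assoc]
      _ = (1 - T ^ N) * (1 - T)⁻¹ := by rw [h]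
  -- powers of T tend to zero entrywise
  have hTN : ∀ i j : Fin n, Tendsto (fun N : ℕ => (T ^ N) i j) atTop (𝓝 0) := by
    obtain ⟨x, hx1, hx2⟩ := exists_between hρT
    have hxtop : x ≠ ⊤ := ne_top_of_lt hx2
    set r : ℝ≥0 := x.toNNReal with hrdef
    have hr1 : (r : ℝ) < 1 := by
      have := (ENNReal.toReal_lt_toReal hxtop ENNReal.one_ne_top).mpr hx2
      rwa [ENNReal.toReal_one] at this
    have hrρ : spectralRadius ℂ (mcx T) < (r : ℝ≥0∞) := by
      rwa [hrdef, ENNReal.coe_toNNReal hxtop]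
    have gel := spectrum.pow_nnnorm_pow_one_div_tendsto_nhds_spectralRadius (mcx T)
    have hev1 : ∀ᶠ N : ℕ in atTop, (‖(mcx T) ^ N‖₊ : ℝ≥0∞) ^ (1 / (N : ℕ) : ℝ) < (r : ℝ≥0∞) :=
      gel.eventually_lt_const hrρ
    have hev : ∀ᶠ N : ℕ in atTop, ‖(mcx T) ^ N‖ ≤ (r : ℝ) ^ N := by
      filter_upwards [hev1, eventually_ge_atTop 1] with N h1 hN1
      have hN0 : (N : ℝ) ≠ 0 := Nat.cast_ne_zero.mpr (by omega)
      have h2 : (‖(mcx T) ^ N‖₊ : ℝ≥0∞) ≤ (r : ℝ≥0∞) ^ (N : ℕ) := by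
        have h3 := ENNReal.rpow_le_rpow h1.le (Nat.cast_nonneg N : (0:ℝ) ≤ N)
        rw [← ENNReal.rpow_mul, one_div, inv_mul_cancel₀ hN0, ENNReal.rpow_one,
          ENNReal.rpow_natCast] at h3
        exact h3
      have h4 : ‖(mcx T) ^ N‖₊ ≤ r ^ N := by
        have := h2
        rw [← ENNReal.coe_pow, ENNReal.coe_le_coe] at this
        exact this
      calc ‖(mcx T) ^ N‖ = ((‖(mcx T) ^ N‖₊ : ℝ≥0) : ℝ) := (coe_nnnorm _).symm
        _ ≤ ((r ^ N : ℝ≥0) : ℝ) := NNReal.coe_le_coe.mpr h4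
        _ = (r : ℝ) ^ N := by push_cast; ring
    intro i j
    have hb : ∀ᶠ N : ℕ in atTop, ‖(T ^ N) i j‖ ≤ (r : ℝ) ^ N := by
      filter_upwards [hev] with N hN
      calc ‖(T ^ N) i j‖ = ‖(mcx (T ^ N)) i j‖ := by
            simp [mcx, Matrix.map_apply, Complex.norm_real]
        _ ≤ ‖mcx (T ^ N)‖ := entry_norm_le _ i j
        _ = ‖(mcx T) ^ N‖ := by rw [mcx_pow]
        _ ≤ (r : ℝ) ^ N := hN
    have hg : Tendsto (fun N : ℕ => (r : ℝ) ^ N) atTop (𝓝 0) :=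
      tendsto_pow_atTop_nhds_zero_of_lt_one r.coe_nonneg hr1
    exact squeeze_zero_norm' hb hg
  -- entries of (1-T)⁻¹ are limits of the partial sums, hence nonneg
  have hSlim : ∀ i j : Fin n, Tendsto (fun N : ℕ => (∑ k ∈ Finset.range N, T ^ k) i j)
      atTop (𝓝 ((1 - T)⁻¹ i j)) := by
    intro i j
    have h1 : ∀ N : ℕ, (∑ k ∈ Finset.range N, T ^ k) i j
        = (1 - T)⁻¹ i j - (T ^ N * (1 - T)⁻¹) i j := by
      intro N
      rw [hS N, sub_mul, one_mul, Matrix.sub_apply]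
    have h2 : Tendsto (fun N : ℕ => (T ^ N * (1 - T)⁻¹) i j) atTop (𝓝 0) := by
      have h3 : Tendsto (fun N : ℕ => ∑ l, (T ^ N) i l * (1 - T)⁻¹ l j) atTop
          (𝓝 (∑ l : Fin n, 0 * (1 - T)⁻¹ l j)) :=
        tendsto_finset_sum _ fun l _ => (hTN i l).mul_const _
      simp only [zero_mul, Finset.sum_const_zero] at h3
      refine h3.congr fun N => ?_
      rw [Matrix.mul_apply]
    have h4 := (tendsto_const_nhds (x := (1 - T)⁻¹ i j) (f := atTop (α := ℕ))).sub h2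
    rw [sub_zero] at h4
    exact h4.congr fun N => (h1 N).symm
  have hInvNN : ∀ i j : Fin n, 0 ≤ (1 - T)⁻¹ i j := by
    intro i j
    refine ge_of_tendsto (hSlim i j) (Eventually.of_forall fun N => ?_)
    rw [Matrix.sum_apply]
    exact Finset.sum_nonneg fun k _ => nn_pow hT k i j
  have hBnn : ∀ i j, 0 ≤ (F * (1 - T)⁻¹) i j := nn_mul hF hInvNN
  -- some power of B has positive diagonal entry
  have hmex : ∃ m : ℕ, 0 < m ∧ ∃ i, 0 < ((F * (1 - T)⁻¹) ^ m) i i := by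
    by_contra hc
    push_neg at hc
    have hz := pow_card_eq_zero hBnn (fun m hm i => hc m hm i)
    have h0 := specRad_eq_zero_of_pow (F * (1 - T)⁻¹) hn hz
    rw [h0] at hR
    exact lt_irrefl 0 hR
  obtain ⟨m, hm, i, hi⟩ := hmex
  -- approximate by a finite partial sum
  have hlim := tendsto_entry_pow (f := fun N => F * (∑ k ∈ Finset.range N, T ^ k))
    (A := F * (1 - T)⁻¹)
    (tendsto_entry_mul (fun i j => tendsto_const_nhds) hSlim) m i i
  obtain ⟨N, hNpos, hN1⟩ :=
    ((hlim.eventually (eventually_gt_nhds hi)).and (eventually_ge_atTop 1)).exists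
  set S := ∑ k ∈ Finset.range N, T ^ k with hSdef
  set c : ℝ := ((F * S) ^ m) i i with hcdef
  have hcpos : 0 < c := hNpos
  -- now choose a
  obtain ⟨q, hqdef⟩ : ∃ q : ℕ, q = (N + 1) * m := ⟨_, rfl⟩
  have hq : 0 < q := by rw [hqdef]; positivity
  have hM1 : (0 : ℝ) < M + 1 := by linarith
  obtain ⟨b, hb1, hbc⟩ : ∃ b : ℝ, 1 ≤ b ∧ (M + 1) ^ q < b * c := by
    refine ⟨(M + 1) ^ q / c + 1, ?_, ?_⟩
    · have h : 0 < (M + 1) ^ q / c := div_pos (pow_pos hM1 q) hcpos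
      linarith
    · rw [add_mul, div_mul_cancel₀ _ hcpos.ne', one_mul]
      linarith
  obtain ⟨a, hadef⟩ : ∃ a : ℝ, a = (N : ℝ) * b := ⟨_, rfl⟩
  have hNr : (0 : ℝ) < N := Nat.cast_pos.mpr (by omega)
  have ha : 0 < a := by rw [hadef]; exact mul_pos hNr (by linarith)
  refine ⟨a, ha, ?_⟩
  set P := T + a • F with hPdef
  set K := (1 : Matrix (Fin n) (Fin n) ℝ) + P with hKdef
  have h1nn : ∀ i j : Fin n, 0 ≤ (1 : Matrix (Fin n) (Fin n) ℝ) i j := by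
    intro i j
    by_cases h : i = j <;> simp [Matrix.one_apply, h]
  have hPnn : ∀ i j : Fin n, 0 ≤ P i j := by
    intro i j
    rw [hPdef, Matrix.add_apply, Matrix.smul_apply, smul_eq_mul]
    exact add_nonneg (hT i j) (mul_nonneg ha.le (hF i j))
  have hKnn : ∀ i j : Fin n, 0 ≤ K i j := fun i j =>
    add_nonneg (h1nn i j) (hPnn i j)
  have hTK : ∀ i j : Fin n, T i j ≤ K i j := by
    intro i j
    rw [hKdef, Matrix.add_apply, hPdef, Matrix.add_apply, Matrix.smul_apply, smul_eq_mul]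
    have := mul_nonneg ha.le (hF i j)
    have := h1nn i j
    linarith
  have hFK : ∀ i j : Fin n, (a • F) i j ≤ K i j := by
    intro i j
    rw [hKdef, Matrix.add_apply, hPdef, Matrix.add_apply]
    have := hT i j
    have := h1nn i j
    linarith
  -- growth of powers of K along exponents
  have hKmono : ∀ k l : ℕ, k ≤ l → ∀ i j : Fin n, (K ^ k) i j ≤ (K ^ l) i j := by
    intro k l hkl
    obtain ⟨d, rfl⟩ := Nat.le.dest hkl
    induction d with
    | zero => intro i j; simp
    | succ d ih =>
        intro i j
        refine (ih (by omega) i j).trans ?_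
        have h1 : K ^ (k + (d + 1)) = K ^ (k + d) * K := by rw [← pow_succ]; ring_nf
        rw [h1, Matrix.mul_apply]
        calc (K ^ (k + d)) i j = (K ^ (k + d)) i j * 1 := by ring
          _ ≤ (K ^ (k + d)) i j * K j j := by
              refine mul_le_mul_of_nonneg_left ?_ (nn_pow hKnn _ i j)
              rw [hKdef, Matrix.add_apply, Matrix.one_apply_eq]
              have := hPnn j j
              linarith
          _ ≤ ∑ l, (K ^ (k + d)) i l * K l j :=
              Finset.single_le_sum (f := fun l => (K ^ (k + d)) i l * K l j)
                (fun l _ => mul_nonneg (nn_pow hKnn _ i l) (hKnn l j)) (Finset.mem_univ j)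
  -- main entrywise estimate : a • (F * S) ≤ (N:ℝ) • K^(N+1)
  have hSnn : ∀ i j : Fin n, 0 ≤ S i j := by
    intro i j
    rw [hSdef, Matrix.sum_apply]
    exact Finset.sum_nonneg fun k _ => nn_pow hT k i j
  have hSK : ∀ i j : Fin n, S i j ≤ ((N : ℝ) • (K ^ N)) i j := by
    intro i j
    rw [hSdef, Matrix.sum_apply, Matrix.smul_apply, smul_eq_mul]
    calc ∑ k ∈ Finset.range N, (T ^ k) i j
        ≤ ∑ _k ∈ Finset.range N, (K ^ N) i j := by
          refine Finset.sum_le_sum fun k hk => ?_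
          exact (pow_mono hT hTK k i j).trans
            (hKmono k N (le_of_lt (Finset.mem_range.mp hk)) i j)
      _ = (N : ℝ) * (K ^ N) i j := by
          rw [Finset.sum_const, Finset.card_range, nsmul_eq_mul]
  have hstep : ∀ i j : Fin n, (a • (F * S)) i j ≤ ((N : ℝ) • (K ^ (N + 1))) i j := by
    intro i j
    have h1 : a • (F * S) = (a • F) * S := by rw [Matrix.smul_mul]
    have h2 : ((a • F) * S) i j ≤ (K * ((N : ℝ) • (K ^ N))) i j := by
      refine mul_mono ?_ hSnn hFK hSK i j
      intro i j
      rw [Matrix.smul_apply, smul_eq_mul]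
      exact mul_nonneg ha.le (hF i j)
    have h3 : K * ((N : ℝ) • (K ^ N)) = (N : ℝ) • (K ^ (N + 1)) := by
      rw [mul_smul_comm, ← pow_succ']
    rw [h1]
    rw [h3] at h2
    exact h2
  -- take m-th powers
  have haFSnn : ∀ i j : Fin n, 0 ≤ (a • (F * S)) i j := by
    intro i j
    rw [Matrix.smul_apply, smul_eq_mul]
    exact mul_nonneg ha.le (nn_mul hF hSnn i j)
  have hpowle := pow_mono haFSnn hstep m i i
  have hLHS : ((a • (F * S)) ^ m) i i = a ^ m * c := by
    rw [smul_pow, Matrix.smul_apply, smul_eq_mul, hcdef]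
  have hRHS : (((N : ℝ) • (K ^ (N + 1))) ^ m) i i = (N : ℝ) ^ m * (K ^ q) i i := by
    rw [smul_pow, Matrix.smul_apply, smul_eq_mul, ← pow_mul, ← hqdef]
  rw [hLHS, hRHS] at hpowle
  -- spectral radius bound
  have hdiag := diag_le_specRad_pow hKnn i hq
  -- arithmetic: N^m * (M+1)^q < a^m * c
  have harith : (N : ℝ) ^ m * (M + 1) ^ q < a ^ m * c := by
    have hbm : b ≤ b ^ m := le_self_pow₀ (by linarith) hm.ne'
    have h5 : b * c ≤ b ^ m * c := mul_le_mul_of_nonneg_right hbm hcpos.le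
    have h6 : a ^ m = (N : ℝ) ^ m * b ^ m := by rw [hadef, mul_pow]
    rw [h6, mul_assoc]
    have h7 : (0 : ℝ) < (N : ℝ) ^ m := by positivity
    have h8 : (M + 1) ^ q < b ^ m * c := lt_of_lt_of_le hbc h5
    exact (mul_lt_mul_iff_right₀ h7).mpr h8
  -- conclude specRad K > M + 1
  have hKrad : M + 1 < specRad K := by
    by_contra hcon
    push_neg at hcon
    have h9 : specRad K ^ q ≤ (M + 1) ^ q :=
      pow_le_pow_left₀ (specRad_nonneg K) hcon q
    have h10 : (N : ℝ) ^ m * (K ^ q) i i ≤ (N : ℝ) ^ m * (M + 1) ^ q := by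
      refine mul_le_mul_of_nonneg_left (hdiag.trans h9) (by positivity)
    linarith
  have hshift : specRad K ≤ 1 + specRad P := specRad_one_add_le P
  have : M < specRad P := by linarith
  exact this

end Aux
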